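/- Let G ⊆ X be a subgroup of a finite group with a transversal M ∋ e of the right cosets (each x ∈ X factorizes uniquely as x = us with u ∈ G, s ∈ M). Define s▷u ∈ G and s◁u ∈ M by su = (s▷u)(s◁u), and τ(s,t) ∈ G, s·t ∈ M by st = τ(s,t)(s·t). For an object V (a G×(G\X)-graded/action space with ⟨ξ◁̄u⟩ = ⟨ξ⟩◁u) define the conjugate V̄ with ⟨v̄⟩ = ⟨v⟩^R and v̄◁̄u = (v◁̄(⟨v⟩^R▷u))‾, where t^R is the right inverse (t·t^R = e), assumed unique. Then ◁̄ on V̄ is a right G-action: (v̄◁̄u)◁̄w = v̄◁̄(uw). -/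
import Mathlib


/-- Coset representative category: `G ≤ X` finite groups, `M ∋ e` a transversal of the cosets
(every `x ∈ X` factorizes uniquely as `x = u s` with `u ∈ G`, `s ∈ M`), with the matched
operations `s ▷ u ∈ G`, `s ◁ u ∈ M` (`s u = (s ▷ u)(s ◁ u)`) and `τ(s,t) ∈ G`,
`s · t ∈ M` (`s t = τ(s,t)(s·t)`), and unique right inverses `t^R` (`t · t^R = e`).
For an `M`-graded right `G`-representation `V` (`⟨ξ ◁̄ u⟩ = ⟨ξ⟩ ◁ u`), the conjugate `V̄`
with `⟨v̄⟩ = ⟨v⟩^R` and `v̄ ◁̄ u = (v ◁̄ (⟨v⟩^R ▷ u))‾` carries a right `G`-action: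
`(v̄ ◁̄ u) ◁̄ w = v̄ ◁̄ (u w)`. -/
theorem coset_conjugate_right_action
    (X : Type*) [Group X] [Fintype X] (G : Subgroup X)
    (M : Type*) (emb : M → X)
    (hfactor : ∀ x : X, ∃! p : G × M, x = (p.1 : X) * emb p.2)
    (trl : M → G → G) (trr : M → G → M)
    (htr : ∀ (s : M) (u : G), emb s * (u : X) = (trl s u : X) * emb (trr s u))
    (tau : M → M → G) (dot : M → M → M)
    (htau : ∀ s t : M, emb s * emb t = (tau s t : X) * emb (dot s t))
    (eM : M) (heM : emb eM = 1)
    (Rinv : M → M) (hR : ∀ t : M, dot t (Rinv t) = eM)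
    (hRuniq : ∀ t t' : M, dot t t' = eM → t' = Rinv t)
    (V : Type*) [AddCommGroup V] [Module ℂ V]
    (comp : M → Submodule ℂ V)
    (act : V → G → V)
    (hact1 : ∀ v : V, act v 1 = v)
    (hactmul : ∀ (v : V) (u w : G), act (act v u) w = act v (u * w))
    (hactlin : ∀ u : G, IsLinearMap ℂ (act · u))
    (hcompat : ∀ (s : M) (v : V), v ∈ comp s → ∀ u : G, act v u ∈ comp (trr s u)) :
    ∀ (s : M) (v : V), v ∈ comp s → ∀ u w : G,
      act (act v (trl (Rinv s) u)) (trl (Rinv (trr s (trl (Rinv s) u))) w) =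
        act v (trl (Rinv s) (u * w)) := by
  -- uniqueness of factorization
  have huniq : ∀ (g1 g2 : G) (m1 m2 : M),
      (g1 : X) * emb m1 = (g2 : X) * emb m2 → g1 = g2 ∧ m1 = m2 := by
    intro g1 g2 m1 m2 h
    obtain ⟨p, -, hp⟩ := hfactor ((g1 : X) * emb m1)
    have h1 : (g1, m1) = p := hp (g1, m1) rfl
    have h2 : (g2, m2) = p := hp (g2, m2) h
    constructor
    · exact congrArg Prod.fst (h1.trans h2.symm)
    · exact congrArg Prod.snd (h1.trans h2.symm)
  -- matched pair identities for trl/trr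
  have hmp : ∀ (t : M) (u w : G),
      trl t (u * w) = trl t u * trl (trr t u) w ∧
      trr t (u * w) = trr (trr t u) w := by
    intro t u w
    have h1 : (trl t (u * w) : X) * emb (trr t (u * w)) =
        ((trl t u * trl (trr t u) w : G) : X) * emb (trr (trr t u) w) := by
      calc (trl t (u * w) : X) * emb (trr t (u * w))
          = emb t * ((u * w : G) : X) := (htr t (u * w)).symm
        _ = (emb t * (u : X)) * (w : X) := by push_cast; group
        _ = ((trl t u : X) * emb (trr t u)) * (w : X) := by rw [htr]
        _ = (trl t u : X) * (emb (trr t u) * (w : X)) := by group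
        _ = (trl t u : X) * ((trl (trr t u) w : X) * emb (trr (trr t u) w)) := by rw [htr]
        _ = ((trl t u * trl (trr t u) w : G) : X) * emb (trr (trr t u) w) := by
            push_cast; group
    exact huniq _ _ _ _ h1
  intro s v hv u w
  set t := Rinv s with ht
  set a := trl t u with ha
  -- key: Rinv (trr s a) = trr t u
  have hkey : Rinv (trr s a) = trr t u := by
    refine (hRuniq _ _ ?_).symm
    -- compute emb s * emb t * u in two ways
    have hc : ((tau s t * u : G) : X) * emb eM =
        ((trl s a * tau (trr s a) (trr t u) : G) : X) * emb (dot (trr s a) (trr t u)) := by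
      calc ((tau s t * u : G) : X) * emb eM
          = (tau s t : X) * emb (dot s t) * (u : X) := by
            rw [ht, hR, heM]; push_cast; group
        _ = emb s * emb t * (u : X) := by rw [htau]
        _ = emb s * ((trl t u : X) * emb (trr t u)) := by rw [mul_assoc, htr]
        _ = (emb s * (a : X)) * emb (trr t u) := by rw [ha]; group
        _ = ((trl s a : X) * emb (trr s a)) * emb (trr t u) := by rw [htr]
        _ = (trl s a : X) * ((tau (trr s a) (trr t u) : X) * emb (dot (trr s a) (trr t u))) := by
            rw [mul_assoc, htau]
        _ = ((trl s a * tau (trr s a) (trr t u) : G) : X) * emb (dot (trr s a) (trr t u)) := by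
            push_cast; group
    exact ((huniq _ _ _ _ hc).2).symm
  rw [hactmul, hkey, (hmp t u w).1]
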